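/- Let n ≥ 1, q = 3^n, C_0 the nonzero squares of F_q, C_1 the nonsquares, t a positive integer, and α, β, γ ∈ F_q^*. Define f : F_q → F_q by f(0) = 0, f(x) = α(x^3 + γx^2 + γ^2 x) for x ∈ C_0, and f(x) = β·x^t for x ∈ C_1. Assume f is a bijection of F_q (equivalently gcd(t, (q-1)/2) = 1, γ is a nonsquare, and η(α) = η(β)·(-1)^(t+1)), and let m ∈ {0,1} with m = 0 if α is a square and m = 1 otherwise. Let r, s be integers with 1 ≤ s < (q-1)/2 and s·t + r·(q-1)/2 = 1, let u(x) = Σ_{j=0}^{n-1} Σ_{k=0}^{n-1} γ·(α^{-1}γ^{-3}x)^((3^j+3^k)/2) and v(x) = (-1)^r·(β^{-1}x)^s, and let g(x) = -u(x)(1 + (-1)^m x^((q-1)/2)) - v(x)(1 + (-1)^(m+1) x^((q-1)/2)). Then g(f(c)) = c for every c ∈ F_q. -/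

import Mathlib

theorem stmt_19 {F : Type*} [Field F] [Fintype F] (n : ℕ) (hn : 1 ≤ n)
    (hcard : Fintype.card F = 3 ^ n)
    (t : ℕ) (ht : 0 < t)
    (α β γ : F) (hα : α ≠ 0) (hβ : β ≠ 0) (hγ : γ ≠ 0)
    (f u v g : F → F)
    (hf0 : f 0 = 0)
    (hfs : ∀ x : F, x ≠ 0 → IsSquare x → f x = α * (x ^ 3 + γ * x ^ 2 + γ ^ 2 * x))
    (hfn : ∀ x : F, x ≠ 0 → ¬ IsSquare x → f x = β * x ^ t)
    (hbij : Function.Bijective f)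
    (m : ℕ) (hm : (IsSquare α ∧ m = 0) ∨ (¬ IsSquare α ∧ m = 1))
    (s : ℕ) (r : ℤ) (hs1 : 1 ≤ s) (hs2 : s < (3 ^ n - 1) / 2)
    (hsr : (s : ℤ) * t + r * ((3 ^ n - 1) / 2 : ℕ) = 1)
    (hu : ∀ x, u x = ∑ j ∈ Finset.range n, ∑ k ∈ Finset.range n,
        γ * (α⁻¹ * γ⁻¹ ^ 3 * x) ^ ((3 ^ j + 3 ^ k) / 2))
    (hv : ∀ x, v x = (-1 : F) ^ r * (β⁻¹ * x) ^ s)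
    (hg : ∀ x, g x = -(u x) * (1 + (-1 : F) ^ m * x ^ ((3 ^ n - 1) / 2)) -
        v x * (1 + (-1 : F) ^ (m + 1) * x ^ ((3 ^ n - 1) / 2))) :
    ∀ c : F, g (f c) = c := by
  classical
  -- characteristic 3
  have h30 : (3 : F) = 0 := by
    have h := FiniteField.cast_card_eq_zero F
    rw [hcard] at h
    push_cast at h
    exact pow_eq_zero_iff (by omega) |>.mp h
  have hr3 : ringChar F = 3 :=
    CharP.ringChar_of_prime_eq_zero (by norm_num) h30
  haveI hc3 : CharP F 3 := hr3 ▸ ringChar.charP F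
  have hr2 : ringChar F ≠ 2 := by rw [hr3]; norm_num
  have h2ne : (2 : F) ≠ 0 := Ring.two_ne_zero hr2
  have hne : (1 : F) ≠ -1 := by
    intro h
    apply h2ne
    linear_combination h
  set e : ℕ := (3 ^ n - 1) / 2 with he
  have hoddq : Odd (3 ^ n) := Odd.pow ⟨1, by norm_num⟩
  obtain ⟨p, hp⟩ := hoddq
  have hq3 : 3 ≤ 3 ^ n := by
    calc 3 = 3 ^ 1 := (pow_one 3).symm
    _ ≤ 3 ^ n := Nat.pow_le_pow_right (by norm_num) hn
  have hqe : Fintype.card F / 2 = e := by rw [hcard, he]; omega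
  have hepos : 0 < e := by omega
  -- f is nonzero away from 0
  have hfne : ∀ x : F, x ≠ 0 → f x ≠ 0 := by
    intro x hx h
    exact hx (hbij.1 (h.trans hf0.symm))
  -- γ is a nonsquare
  have hγns : ¬ IsSquare γ := by
    intro h
    have h1 : f γ = 0 := by
      rw [hfs γ hγ h]; linear_combination α * γ ^ 3 * h30
    exact hγ (hbij.1 (h1.trans hf0.symm))
  have hpow_sq : ∀ x : F, x ≠ 0 → IsSquare x → x ^ e = 1 := by
    intro x hx h
    have := (FiniteField.isSquare_iff hr2 hx).mp h
    rwa [hqe] at this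
  have hpow_ns : ∀ x : F, x ≠ 0 → ¬ IsSquare x → x ^ e = -1 := by
    intro x hx h
    rcases FiniteField.pow_dichotomy hr2 hx with h1 | h1
    · exact absurd ((FiniteField.isSquare_iff hr2 hx).mpr h1) h
    · rwa [hqe] at h1
  have hαe : α ^ e = (-1 : F) ^ m := by
    rcases hm with ⟨ha, rfl⟩ | ⟨ha, rfl⟩
    · simp [hpow_sq α hα ha]
    · simp [hpow_ns α hα ha]
  have hm1 : (-1 : F) ^ m = 1 ∨ (-1 : F) ^ m = -1 := by
    rcases hm with ⟨_, rfl⟩ | ⟨_, rfl⟩ <;> norm_num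
  -- f on squares, factored form
  have hfc : ∀ x : F, x ≠ 0 → IsSquare x → f x = α * (x * (x - γ) ^ 2) := by
    intro x hx h
    rw [hfs x hx h]; linear_combination α * γ * x ^ 2 * h30
  have hsubγ : ∀ x : F, IsSquare x → x - γ ≠ 0 := by
    intro x h hxe
    exact hγns (by rwa [sub_eq_zero.mp hxe] at h)
  -- character of f on squares
  have hfse : ∀ x : F, x ≠ 0 → IsSquare x → (f x) ^ e = (-1 : F) ^ m := by
    intro x hx h
    rw [hfc x hx h, mul_pow, mul_pow, hαe, hpow_sq x hx h,
      hpow_sq ((x - γ) ^ 2) (pow_ne_zero 2 (hsubγ x h)) ⟨x - γ, by ring⟩]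
    ring
  -- character of f on nonsquares: counting argument
  have hfnse : ∀ x : F, x ≠ 0 → ¬ IsSquare x → (f x) ^ e = -(-1 : F) ^ m := by
    intro x hx hxs
    have key : (f x) ^ e ≠ (-1 : F) ^ m := by
      intro hcon
      have hall : ∀ y : F, y ≠ 0 → (f y) ^ e = (-1 : F) ^ m := by
        intro y hy
        by_cases hys : IsSquare y
        · exact hfse y hy hys
        · rw [hfn y hy hys, mul_pow, ← pow_mul, mul_comm t e, pow_mul, hpow_ns y hy hys]
          rw [hfn x hx hxs, mul_pow, ← pow_mul, mul_comm t e, pow_mul, hpow_ns x hx hxs] at hcon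
          exact hcon
      have hsub : ∀ y ∈ Finset.univ.erase (0 : F),
          f y ∈ (Polynomial.nthRoots e ((-1 : F) ^ m)).toFinset := by
        intro y hy
        rw [Multiset.mem_toFinset, Polynomial.mem_nthRoots hepos]
        exact hall y (Finset.mem_erase.mp hy).1
      have hcardle := Finset.card_le_card_of_injOn f hsub
        (fun a _ b _ h => hbij.1 h)
      have h1 : (Finset.univ.erase (0 : F)).card = Fintype.card F - 1 := by
        rw [Finset.card_erase_of_mem (Finset.mem_univ _), Finset.card_univ]
      have h2 : (Polynomial.nthRoots e ((-1 : F) ^ m)).toFinset.card ≤ e :=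
        le_trans (Multiset.toFinset_card_le _)
          (by exact_mod_cast Polynomial.card_nthRoots e ((-1 : F) ^ m))
      rw [h1, hcard] at hcardle
      omega
    have hm1 : (-1 : F) ^ m = 1 ∨ (-1 : F) ^ m = -1 := by
      rcases hm with ⟨_, rfl⟩ | ⟨_, rfl⟩ <;> simp
    rcases FiniteField.pow_dichotomy hr2 (hfne x hx) with h1 | h1 <;> rw [hqe] at h1 <;>
      rcases hm1 with h2 | h2 <;> rw [h1, h2] <;> rw [h1, h2] at key <;>
      first
        | exact absurd rfl key
        | ring_nf
        | (exfalso; exact key rfl)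
  intro c
  by_cases hc0 : c = 0
  · subst hc0
    rw [hf0, hg, hu, hv]
    have hu0 : ∀ j ∈ Finset.range n, ∀ k ∈ Finset.range n,
        γ * (α⁻¹ * γ⁻¹ ^ 3 * (0 : F)) ^ ((3 ^ j + 3 ^ k) / 2) = 0 := by
      intro j _ k _
      have h1 : 1 ≤ 3 ^ j := Nat.one_le_pow _ _ (by norm_num)
      have h2 : 1 ≤ 3 ^ k := Nat.one_le_pow _ _ (by norm_num)
      have : (3 ^ j + 3 ^ k) / 2 ≠ 0 := by omega
      rw [mul_zero, zero_pow this, mul_zero]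
    rw [Finset.sum_congr rfl (fun j hj => Finset.sum_congr rfl (hu0 j hj))]
    simp [zero_pow (by omega : s ≠ 0)]
  by_cases hcs : IsSquare c
  · -- square case
    obtain ⟨d, hd⟩ := hcs
    have hcs : IsSquare c := ⟨d, hd⟩
    have hd0 : d ≠ 0 := by
      intro h; rw [h, mul_zero] at hd; exact hc0 hd
    have hfce : (f c) ^ e = (-1 : F) ^ m := hfse c hc0 hcs
    suffices hsuff : u (f c) = c by
      rw [hg, hfce, pow_succ]
      rcases hm1 with h | h <;> rw [h] <;>
        linear_combination hsuff - u (f c) * h30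
    -- u (f c) = c
    rw [hu]
    set w : F := γ⁻¹ * d ^ 3 - d with hw
    set b : ℕ → F := fun j => w ^ (3 ^ j) * (γ⁻¹) ^ ((3 ^ j - 1) / 2) with hb
    set a : ℕ → F := fun j => d ^ (3 ^ j) * (γ⁻¹) ^ ((3 ^ j - 1) / 2) with ha
    have hy : α⁻¹ * γ⁻¹ ^ 3 * f c = γ⁻¹ * w ^ 2 := by
      rw [hfc c hc0 hcs, hd, hw]
      field_simp
    have hterm : ∀ j k : ℕ,
        γ * (α⁻¹ * γ⁻¹ ^ 3 * f c) ^ ((3 ^ j + 3 ^ k) / 2) = b j * b k := by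
      intro j k
      obtain ⟨aj, haj⟩ : Odd (3 ^ j) := Odd.pow ⟨1, by norm_num⟩
      obtain ⟨ak, hak⟩ : Odd (3 ^ k) := Odd.pow ⟨1, by norm_num⟩
      have hE : (3 ^ j + 3 ^ k) / 2 = 1 + (3 ^ j - 1) / 2 + (3 ^ k - 1) / 2 := by omega
      have h2E : (3 ^ j - 1) / 2 + (3 ^ k - 1) / 2 + 1 + ((3 ^ j - 1) / 2 + (3 ^ k - 1) / 2 + 1)
          = 3 ^ j + 3 ^ k := by omega
      rw [hy, hE, hb]
      simp only []
      rw [mul_pow]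
      have hwp : (w ^ 2) ^ (1 + (3 ^ j - 1) / 2 + (3 ^ k - 1) / 2)
          = w ^ (3 ^ j) * w ^ (3 ^ k) := by
        rw [← pow_mul, ← pow_add]
        congr 1
        omega
      rw [hwp, pow_add, pow_add, pow_one]
      field_simp
    have hbj : ∀ j : ℕ, b j = a (j + 1) - a j := by
      intro j
      obtain ⟨aj, haj⟩ : Odd (3 ^ j) := Odd.pow ⟨1, by norm_num⟩
      have hexp : 3 ^ j + (3 ^ j - 1) / 2 = (3 ^ (j + 1) - 1) / 2 := by
        rw [pow_succ]; omega
      have h3j : 3 * 3 ^ j = 3 ^ (j + 1) := by rw [pow_succ]; ring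
      have hfrob : w ^ (3 ^ j) = (γ⁻¹) ^ (3 ^ j) * d ^ (3 ^ (j + 1)) - d ^ (3 ^ j) := by
        rw [hw, sub_pow_char_pow (p := 3), mul_pow, ← pow_mul, h3j]
      rw [hb, ha]
      simp only []
      rw [hfrob, ← hexp, pow_add]
      ring
    have hsum : ∑ j ∈ Finset.range n, b j = d := by
      have := Finset.sum_range_sub a n
      rw [Finset.sum_congr rfl (fun j _ => hbj j), this, ha]
      simp only []
      have hdq : d ^ (3 ^ n) = d := by rw [← hcard]; exact FiniteField.pow_card d
      have hγe : (γ⁻¹) ^ ((3 ^ n - 1) / 2) = -1 := by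
        rw [inv_pow, ← he, hpow_ns γ hγ hγns]
        norm_num
      rw [hdq, hγe]
      norm_num
      linear_combination -d * h30
    calc ∑ j ∈ Finset.range n, ∑ k ∈ Finset.range n,
        γ * (α⁻¹ * γ⁻¹ ^ 3 * f c) ^ ((3 ^ j + 3 ^ k) / 2)
        = ∑ j ∈ Finset.range n, ∑ k ∈ Finset.range n, b j * b k := by
          exact Finset.sum_congr rfl fun j _ => Finset.sum_congr rfl fun k _ => hterm j k
      _ = (∑ j ∈ Finset.range n, b j) * (∑ k ∈ Finset.range n, b k) := by
          rw [Finset.sum_mul_sum]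
      _ = d * d := by rw [hsum]
      _ = c := hd.symm
  · -- nonsquare case
    have hfce : (f c) ^ e = -(-1 : F) ^ m := hfnse c hc0 hcs
    have hgoal : ∀ hv2 : v (f c) = c, g (f c) = c := by
      intro hv2
      rw [hg, hfce, pow_succ]
      rcases hm1 with h | h <;> rw [h] <;>
        linear_combination hv2 - v (f c) * h30
    apply hgoal
    have hce : c ^ e = -1 := hpow_ns c hc0 hcs
    have hv2 : v (f c) = c := by
      rw [hv, hfn c hc0 hcs, ← mul_assoc, inv_mul_cancel₀ hβ, one_mul, ← pow_mul]
      have hneg : (-1 : F) ≠ 0 := by norm_num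
      have hz1 : ((-1 : F) ^ r) * ((-1 : F) ^ r) = 1 := by
        rw [← zpow_add₀ hneg, ← two_mul, zpow_mul]
        norm_num
      have hts : ((t * s : ℕ) : ℤ) = 1 - (e : ℤ) * r := by push_cast; linear_combination hsr
      have hcp : c ^ (t * s) = c * (-1 : F) ^ r := by
        have h1 : c ^ (t * s) = c ^ ((t * s : ℕ) : ℤ) := (zpow_natCast c (t * s)).symm
        rw [h1, hts, zpow_sub₀ hc0, zpow_one, zpow_mul, zpow_natCast, hce,
          div_eq_mul_inv, inv_eq_of_mul_eq_one_left hz1]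
      rw [hcp, ← mul_assoc, mul_comm ((-1:F)^r) c, mul_assoc, hz1, mul_one]
    exact hv2
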